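/- Assume I = [a,b]. A function f : Iⁿ → I is a Sugeno integral if and only if f(e_∅) = a, f(e_X) = b, and f(x) = ⋁_{S⊆X} ( f(e_S) ∧ ⋀_{i∈S} x_i ) for every x ∈ Iⁿ (with the convention ⋀_{i∈∅} x_i = b). -/
import Mathlib


/-- `S↑_σ(i)` (0-indexed): the set `{σ(i), σ(i+1), …, σ(n-1)}`.  For `i = n` it is empty. -/
def SUp {n : ℕ} (σ : Equiv.Perm (Fin n)) (i : ℕ) : Finset (Fin n) :=
  (Finset.univ.filter (fun j : Fin n => i ≤ (j : ℕ))).image σ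

/-- `S↓_σ(i)`: the set `{σ(0), …, σ(i-1)}`.  For `i = 0` it is empty. -/
def SDown {n : ℕ} (σ : Equiv.Perm (Fin n)) (i : ℕ) : Finset (Fin n) :=
  (Finset.univ.filter (fun j : Fin n => (j : ℕ) < i)).image σ

/-- Two tuples are comonotonic if some permutation sorts both nondecreasingly. -/
def Comonotone {n : ℕ} (x y : Fin n → ℝ) : Prop :=
  ∃ σ : Equiv.Perm (Fin n), Monotone (x ∘ σ) ∧ Monotone (y ∘ σ)

/-- The tuple `r·1_S`. -/
def indTuple {n : ℕ} (S : Finset (Fin n)) (r : ℝ) : Fin n → ℝ :=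
  fun j => if j ∈ S then r else 0

/-- The signed Choquet integral of `x` w.r.t. `v`, computed via a sorting permutation. -/
noncomputable def Cv {n : ℕ} (v : Finset (Fin n) → ℝ) (x : Fin n → ℝ) : ℝ :=
  ∑ i : Fin n,
    x (Tuple.sort x i) *
      (v (SUp (Tuple.sort x) (i : ℕ)) - v (SUp (Tuple.sort x) ((i : ℕ) + 1)))

/-- `f` is the restriction to `Iⁿ` of a signed Choquet integral. -/
def IsSignedChoquetOn {n : ℕ} (I : Set ℝ) (f : (Fin n → ℝ) → ℝ) : Prop :=
  ∃ v : Finset (Fin n) → ℝ, v ∅ = 0 ∧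
    ∀ σ : Equiv.Perm (Fin n), ∀ x : Fin n → ℝ, (∀ i, x i ∈ I) → Monotone (x ∘ σ) →
      f x = ∑ i : Fin n, x (σ i) * (v (SUp σ (i : ℕ)) - v (SUp σ ((i : ℕ) + 1)))

/-- `f` is the restriction to `Iⁿ` of a symmetric signed Choquet integral
`Č_v(x) = C_v(x⁺) - C_v(x⁻)`. -/
def IsSymSignedChoquetOn {n : ℕ} (I : Set ℝ) (f : (Fin n → ℝ) → ℝ) : Prop :=
  ∃ v : Finset (Fin n) → ℝ, v ∅ = 0 ∧
    ∀ x : Fin n → ℝ, (∀ i, x i ∈ I) →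
      f x = Cv v (fun i => max (x i) 0) - Cv v (fun i => max (-x i) 0)

/-- Comonotonic modularity (on tuples with entries in `D`). -/
def ComonModularOn {n : ℕ} (D : Set ℝ) (f : (Fin n → ℝ) → ℝ) : Prop :=
  ∀ x y : Fin n → ℝ, (∀ i, x i ∈ D) → (∀ i, y i ∈ D) → Comonotone x y →
    f x + f y = f (fun i => min (x i) (y i)) + f (fun i => max (x i) (y i))

/-- Comonotonic additivity (on tuples with entries in `D`). -/
def ComonAdditiveOn {n : ℕ} (D : Set ℝ) (f : (Fin n → ℝ) → ℝ) : Prop :=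
  ∀ x y : Fin n → ℝ, (∀ i, x i ∈ D) → (∀ i, y i ∈ D) → Comonotone x y →
    (∀ i, x i + y i ∈ D) → f (fun i => x i + y i) = f x + f y

/-- Comonotonic maxitivity. -/
def ComonMaxitiveOn {n : ℕ} (D : Set ℝ) (f : (Fin n → ℝ) → ℝ) : Prop :=
  ∀ x y : Fin n → ℝ, (∀ i, x i ∈ D) → (∀ i, y i ∈ D) → Comonotone x y →
    f (fun i => max (x i) (y i)) = max (f x) (f y)

/-- Comonotonic minitivity. -/
def ComonMinitiveOn {n : ℕ} (D : Set ℝ) (f : (Fin n → ℝ) → ℝ) : Prop :=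
  ∀ x y : Fin n → ℝ, (∀ i, x i ∈ D) → (∀ i, y i ∈ D) → Comonotone x y →
    f (fun i => min (x i) (y i)) = min (f x) (f y)

/-- Horizontal min-additivity. -/
def HorizMinAdditiveOn {n : ℕ} (D : Set ℝ) (f : (Fin n → ℝ) → ℝ) : Prop :=
  ∀ x : Fin n → ℝ, (∀ i, x i ∈ D) → ∀ c ∈ D, (∀ i, x i - min (x i) c ∈ D) →
    f x = f (fun i => min (x i) c) + f (fun i => x i - min (x i) c)

/-- Horizontal max-additivity. -/
def HorizMaxAdditiveOn {n : ℕ} (D : Set ℝ) (f : (Fin n → ℝ) → ℝ) : Prop :=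
  ∀ x : Fin n → ℝ, (∀ i, x i ∈ D) → ∀ c ∈ D, (∀ i, x i - max (x i) c ∈ D) →
    f x = f (fun i => max (x i) c) + f (fun i => x i - max (x i) c)

/-- Horizontal median-additivity (for `I` centered at `0`). -/
def HorizMedAdditiveOn {n : ℕ} (I : Set ℝ) (f : (Fin n → ℝ) → ℝ) : Prop :=
  ∀ x : Fin n → ℝ, (∀ i, x i ∈ I) → ∀ c ∈ I, 0 ≤ c →
    f x = f (fun i => max (-c) (min (x i) c)) + f (fun i => x i - min (x i) c)
        + f (fun i => x i - max (x i) (-c))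

/-- Invariance under horizontal min-differences (for domains of nonnegative tuples). -/
def InvHMinDiffOn {n : ℕ} (D : Set ℝ) (f : (Fin n → ℝ) → ℝ) : Prop :=
  ∀ x : Fin n → ℝ, (∀ i, x i ∈ D) → ∀ c ∈ D,
    f x - f (fun i => min (x i) c) =
      f (fun i => if x i ≤ c then 0 else x i) -
        f (fun i => min (if x i ≤ c then 0 else x i) c)

/-- Invariance under horizontal max-differences (for domains of nonpositive tuples). -/
def InvHMaxDiffOn {n : ℕ} (D : Set ℝ) (f : (Fin n → ℝ) → ℝ) : Prop :=
  ∀ x : Fin n → ℝ, (∀ i, x i ∈ D) → ∀ c ∈ D,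
    f x - f (fun i => max (x i) c) =
      f (fun i => if c ≤ x i then 0 else x i) -
        f (fun i => max (if c ≤ x i then 0 else x i) c)

/-- `⋀_{i ∈ S} x i`, with the convention that the empty infimum is `b`. -/
noncomputable def infWith {n : ℕ} (b : ℝ) (S : Finset (Fin n)) (x : Fin n → ℝ) : ℝ :=
  if h : S.Nonempty then S.inf' h x else b

/-- An `[a,b]`-valued capacity. -/
def IsCapacityOn {n : ℕ} (a b : ℝ) (μ : Finset (Fin n) → ℝ) : Prop :=
  μ ∅ = a ∧ μ Finset.univ = b ∧ ∀ S T : Finset (Fin n), S ⊆ T → μ S ≤ μ T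

/-- `f` is nondecreasing (in each argument) on tuples with entries in `D`. -/
def NondecreasingOn {n : ℕ} (D : Set ℝ) (f : (Fin n → ℝ) → ℝ) : Prop :=
  ∀ x y : Fin n → ℝ, (∀ i, x i ∈ D) → (∀ i, y i ∈ D) → (∀ i, x i ≤ y i) → f x ≤ f y


section Aux

open Finset

lemma mem_SUp {n : ℕ} (σ : Equiv.Perm (Fin n)) (i : ℕ) (j : Fin n) :
    j ∈ SUp σ i ↔ i ≤ ((σ.symm j : Fin n) : ℕ) := by
  simp only [SUp, Finset.mem_image, Finset.mem_filter, Finset.mem_univ, true_and]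
  constructor
  · rintro ⟨k, hk, rfl⟩; simpa using hk
  · intro h; exact ⟨σ.symm j, h, σ.apply_symm_apply j⟩

lemma SUp_zero {n : ℕ} (σ : Equiv.Perm (Fin n)) : SUp σ 0 = Finset.univ := by
  ext j; simp [mem_SUp]

lemma infWith_mono {n : ℕ} {b : ℝ} {S : Finset (Fin n)} {x y : Fin n → ℝ}
    (h : ∀ i, x i ≤ y i) : infWith b S x ≤ infWith b S y := by
  unfold infWith
  split
  · next hne => exact Finset.le_inf' hne _ fun i hi => le_trans (Finset.inf'_le _ hi) (h i)
  · exact le_rfl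

/-- The core combinatorial lemma: for a sorted tuple, the Sugeno integral equals
the max over subsets expression. -/
lemma sugeno_core {n : ℕ} (hn : 0 < n) (a b : ℝ) (hab : a ≤ b)
    (μ : Finset (Fin n) → ℝ) (hμ0 : μ ∅ = a) (hμu : μ Finset.univ = b)
    (hmono : ∀ S T : Finset (Fin n), S ⊆ T → μ S ≤ μ T)
    (σ : Equiv.Perm (Fin n)) (x : Fin n → ℝ)
    (hx : ∀ i, x i ∈ Set.Icc a b) (hsort : Monotone (x ∘ σ)) :
    Finset.sup' Finset.univ ⟨⟨0, hn⟩, Finset.mem_univ _⟩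
        (fun i : Fin n => min (x (σ i)) (μ (SUp σ (i : ℕ))))
      = Finset.sup' Finset.univ ⟨∅, Finset.mem_univ ∅⟩
        (fun S : Finset (Fin n) => min (μ S) (infWith b S x)) := by
  apply le_antisymm
  · apply Finset.sup'_le
    intro i _
    refine le_trans ?_ (Finset.le_sup' _ (Finset.mem_univ (SUp σ (i : ℕ))))
    have hne : (SUp σ (i : ℕ)).Nonempty := ⟨σ i, (mem_SUp σ i (σ i)).2 (by simp)⟩
    rw [infWith, dif_pos hne]
    refine le_min (min_le_right _ _) (Finset.le_inf' _ _ fun j hj => ?_)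
    have hij : (i : ℕ) ≤ ((σ.symm j : Fin n) : ℕ) := (mem_SUp σ i j).1 hj
    have := hsort (show i ≤ σ.symm j from hij)
    simp only [Function.comp_apply, σ.apply_symm_apply] at this
    exact le_trans (min_le_left _ _) this
  · apply Finset.sup'_le
    intro S _
    rcases S.eq_empty_or_nonempty with rfl | hS
    · have hterm : min (μ ∅) (infWith b ∅ x) = a := by
        rw [hμ0, infWith, dif_neg (by simp)]; exact min_eq_left hab
      rw [hterm]
      refine le_trans ?_ (Finset.le_sup' _ (Finset.mem_univ (⟨0, hn⟩ : Fin n)))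
      refine le_min (hx _).1 ?_
      rw [← hμ0]; exact hmono _ _ (Finset.empty_subset _)
    · set i₀ := (S.image (fun s => σ.symm s)).min' (hS.image _) with hi₀
      have hi₀S : σ i₀ ∈ S := by
        have hm : i₀ ∈ S.image (fun s => σ.symm s) := Finset.min'_mem _ _
        rcases Finset.mem_image.1 hm with ⟨s, hs, hse⟩
        rw [← hse, σ.apply_symm_apply]; exact hs
      have hsub : S ⊆ SUp σ (i₀ : ℕ) := by
        intro s hs
        have : i₀ ≤ σ.symm s := Finset.min'_le _ _ (Finset.mem_image_of_mem _ hs)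
        exact (mem_SUp σ _ s).2 this
      refine le_trans ?_ (Finset.le_sup' _ (Finset.mem_univ i₀))
      rw [infWith, dif_pos hS]
      exact le_min (le_trans (min_le_right _ _) (Finset.inf'_le _ hi₀S))
        (le_trans (min_le_left _ _) (hmono _ _ hsub))

end Aux

theorem statement17 (n : ℕ) (hn : 0 < n) (a b : ℝ) (hab : a < b)
    (f : (Fin n → ℝ) → ℝ)
    (hfI : ∀ x : Fin n → ℝ, (∀ i, x i ∈ Set.Icc a b) → f x ∈ Set.Icc a b) :
    (∃ μ : Finset (Fin n) → ℝ, IsCapacityOn a b μ ∧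
      ∀ σ : Equiv.Perm (Fin n), ∀ x : Fin n → ℝ,
        (∀ i, x i ∈ Set.Icc a b) → Monotone (x ∘ σ) →
        f x = Finset.sup' Finset.univ ⟨⟨0, hn⟩, Finset.mem_univ _⟩
          (fun i : Fin n => min (x (σ i)) (μ (SUp σ (i : ℕ)))))
    ↔
    (f (fun _ => a) = a ∧ f (fun _ => b) = b ∧
      ∀ x : Fin n → ℝ, (∀ i, x i ∈ Set.Icc a b) →
        f x = Finset.sup' Finset.univ ⟨∅, Finset.mem_univ ∅⟩
          (fun S : Finset (Fin n) =>
            min (f (fun i => if i ∈ S then b else a)) (infWith b S x))) := by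
  have habl : a ≤ b := hab.le
  have heIcc : ∀ S : Finset (Fin n), ∀ i : Fin n,
      (if i ∈ S then b else a) ∈ Set.Icc a b := by
    intro S i; split
    · exact ⟨habl, le_rfl⟩
    · exact ⟨le_rfl, habl⟩
  constructor
  · rintro ⟨μ, ⟨hμ0, hμu, hmono⟩, hform⟩
    -- f (e_S) = μ S
    have hfe : ∀ S : Finset (Fin n), f (fun i => if i ∈ S then b else a) = μ S := by
      intro S
      set y : Fin n → ℝ := fun i => if i ∈ S then b else a with hy
      have hyI : ∀ i, y i ∈ Set.Icc a b := heIcc S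
      rw [hform (Tuple.sort y) y hyI (Tuple.monotone_sort y),
        sugeno_core hn a b habl μ hμ0 hμu hmono _ y hyI (Tuple.monotone_sort y)]
      apply le_antisymm
      · apply Finset.sup'_le
        intro T _
        by_cases hTS : T ⊆ S
        · exact le_trans (min_le_left _ _) (hmono _ _ hTS)
        · obtain ⟨t, htT, htS⟩ := Finset.not_subset.1 hTS
          refine le_trans (min_le_right _ _) ?_
          rw [infWith, dif_pos ⟨t, htT⟩]
          refine le_trans (Finset.inf'_le _ htT) ?_
          have : y t = a := by simp [hy, htS]
          rw [this, ← hμ0]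
          exact hmono _ _ (Finset.empty_subset _)
      · refine le_trans ?_ (Finset.le_sup' _ (Finset.mem_univ S))
        refine le_min le_rfl ?_
        unfold infWith
        split
        · refine Finset.le_inf' _ _ fun j hj => ?_
          have : y j = b := by simp [hy, hj]
          rw [this, ← hμu]; exact hmono _ _ (Finset.subset_univ _)
        · rw [← hμu]; exact hmono _ _ (Finset.subset_univ _)
    refine ⟨?_, ?_, ?_⟩
    · rw [hform 1 (fun _ => a) (fun i => ⟨le_rfl, habl⟩) monotone_const]
      apply le_antisymm
      · exact Finset.sup'_le _ _ fun i _ => min_le_left _ _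
      · refine le_trans ?_ (Finset.le_sup' _ (Finset.mem_univ (⟨0, hn⟩ : Fin n)))
        refine le_min le_rfl ?_
        rw [← hμ0]; exact hmono _ _ (Finset.empty_subset _)
    · rw [hform 1 (fun _ => b) (fun i => ⟨habl, le_rfl⟩) monotone_const]
      apply le_antisymm
      · exact Finset.sup'_le _ _ fun i _ => min_le_left _ _
      · refine le_trans ?_ (Finset.le_sup' _ (Finset.mem_univ (⟨0, hn⟩ : Fin n)))
        have h0 : SUp (1 : Equiv.Perm (Fin n)) ((⟨0, hn⟩ : Fin n) : ℕ) = Finset.univ :=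
          SUp_zero 1
        rw [h0, hμu]
        exact le_min le_rfl le_rfl
    · intro x hx
      rw [hform (Tuple.sort x) x hx (Tuple.monotone_sort x),
        sugeno_core hn a b habl μ hμ0 hμu hmono _ x hx (Tuple.monotone_sort x)]
      refine Finset.sup'_congr _ rfl fun S _ => ?_
      rw [hfe S]
  · rintro ⟨ha, hb, hform⟩
    refine ⟨fun S => f (fun i => if i ∈ S then b else a), ⟨?_, ?_, ?_⟩, ?_⟩
    · simpa using ha
    · simpa using hb
    · intro S T hST
      show (f fun i => if i ∈ S then b else a) ≤ f fun i => if i ∈ T then b else a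
      rw [hform _ (heIcc S), hform _ (heIcc T)]
      apply Finset.sup'_le
      intro U _
      refine le_trans ?_ (Finset.le_sup' _ (Finset.mem_univ U))
      refine min_le_min le_rfl (infWith_mono fun i => ?_)
      by_cases h : i ∈ S
      · simp [h, hST h]
      · simp only [h, if_false]
        split
        · exact habl
        · exact le_rfl
    · intro σ x hx hsort
      rw [hform x hx,
        ← sugeno_core hn a b habl _ (by simpa using ha) (by simpa using hb) ?_ σ x hx hsort]
      intro S T hST
      show (f fun i => if i ∈ S then b else a) ≤ f fun i => if i ∈ T then b else a
      rw [hform _ (heIcc S), hform _ (heIcc T)]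
      apply Finset.sup'_le
      intro U _
      refine le_trans ?_ (Finset.le_sup' _ (Finset.mem_univ U))
      refine min_le_min le_rfl (infWith_mono fun i => ?_)
      by_cases h : i ∈ S
      · simp [h, hST h]
      · simp only [h, if_false]
        split
        · exact habl
        · exact le_rfl
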